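/- Let T be an invertible bounded linear operator with ‖Tᵏy‖ ≤ c tᵏ‖y‖ for y ∈ M and ‖T^{-k}z‖ ≤ c tᵏ‖z‖ for z ∈ N (c ≥ 1, 0 < t < 1), let X = M ⊕ N with projections P_M, P_N and d = max(‖P_M‖,‖P_N‖), and let Y = M + T⁻¹(N). Fix 0 < γ < 1 and set ε = γ(1−t)/(c d (1+t)). Then for any Lipschitz β ∈ U_b(X) with ‖β‖_∞ ≤ ε and Lip(β) ≤ ε, the map Φ : U_b(X;Y) → U_b(X;Y), Φ(φ) = Ψ⁻¹(β ∘ (I + φ)), is a contraction with Lipschitz constant at most c d (1+t)ε/(1−t) < 1, where Ψ(φ) = φ ∘ T − T ∘ φ; hence Φ has a unique fixed point h, and ‖h‖_∞ ≤ γ. -/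

import Mathlib

open Filter Topology

private lemma uc_of_uniform_approx {α E : Type*} [PseudoMetricSpace α] [PseudoMetricSpace E]
    {g : α → E}
    (h : ∀ η : ℝ, 0 < η → ∃ f : α → E, UniformContinuous f ∧ ∀ x, dist (f x) (g x) ≤ η) :
    UniformContinuous g := by
  rw [Metric.uniformContinuous_iff]
  intro η hη
  obtain ⟨f, hfuc, hfg⟩ := h (η/4) (by positivity)
  obtain ⟨δ, hδ, hf⟩ := Metric.uniformContinuous_iff.mp hfuc (η/4) (by positivity)
  refine ⟨δ, hδ, fun {a b} hab => ?_⟩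
  have h3 := hf hab
  have h1 := hfg a
  have h2 := hfg b
  have h4 := dist_triangle4 (g a) (f a) (f b) (g b)
  have h5 : dist (g a) (f a) = dist (f a) (g a) := dist_comm _ _
  linarith



set_option maxHeartbeats 1600000 in
/-- Under the exponential dichotomy estimates, with
`ε = γ(1−t)/(c d (1+t))` and `β ∈ U_b(X)` Lipschitz with `‖β‖_∞ ≤ ε`,
`Lip(β) ≤ ε`, the map `Φ(φ) = Ψ⁻¹(β ∘ (I + φ))` on `U_b(X;Y)` is a contraction
with constant at most `c d (1+t) ε/(1−t) < 1` (where `Ψ(φ) = φ∘T − T∘φ`); hence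
it has a unique fixed point `h`, and `‖h‖_∞ ≤ γ`. -/
theorem contraction_fixed_point
    {X : Type*} [NormedAddCommGroup X] [NormedSpace ℝ X] [CompleteSpace X]
    (T : X ≃L[ℝ] X) (M N : Submodule ℝ X)
    (hMclosed : IsClosed (M : Set X)) (hNclosed : IsClosed (N : Set X))
    (hcompl : IsCompl M N)
    (hTM : ∀ x ∈ M, T x ∈ M) (hTN : ∀ x ∈ N, T.symm x ∈ N)
    (c t : ℝ) (hc : 1 ≤ c) (ht0 : 0 < t) (ht1 : t < 1)
    (hM : ∀ (n : ℕ), ∀ y ∈ M, ‖(T ^ n) y‖ ≤ c * t ^ n * ‖y‖)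
    (hN : ∀ (n : ℕ), ∀ z ∈ N, ‖(T.symm ^ n) z‖ ≤ c * t ^ n * ‖z‖)
    (PM PN : X →L[ℝ] X)
    (hPM : ∀ x, PM x ∈ M) (hPN : ∀ x, PN x ∈ N) (hP : ∀ x, PM x + PN x = x)
    (d : ℝ) (hd : d = max ‖PM‖ ‖PN‖)
    (Y : Submodule ℝ X)
    (hY : Y = M ⊔ N.comap ((T : X →L[ℝ] X) : X →ₗ[ℝ] X))
    (γ ε : ℝ) (hγ0 : 0 < γ) (hγ1 : γ < 1)
    (hε : ε = γ * (1 - t) / (c * d * (1 + t)))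
    (β : X → X) (hβuc : UniformContinuous β) (hβbd : ∀ x, ‖β x‖ ≤ ε)
    (hβlip : ∀ x y, ‖β x - β y‖ ≤ ε * ‖x - y‖) :
    -- the contraction constant is < 1
    c * d * (1 + t) * ε / (1 - t) < 1 ∧
    -- Φ is Lipschitz with constant c d (1+t) ε/(1−t): if ψᵢ = Φ(φᵢ), i.e.
    -- Ψ(ψᵢ) = β ∘ (I + φᵢ), and the φᵢ are uniformly C-close, then the ψᵢ are
    -- uniformly (c d (1+t) ε/(1−t))·C-close
    (∀ (φ₁ φ₂ ψ₁ ψ₂ : X → X) (C : ℝ),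
      (∀ x, φ₁ x ∈ Y) → (∀ x, φ₂ x ∈ Y) → (∀ x, ψ₁ x ∈ Y) → (∀ x, ψ₂ x ∈ Y) →
      UniformContinuous φ₁ → UniformContinuous φ₂ →
      UniformContinuous ψ₁ → UniformContinuous ψ₂ →
      (∃ C₁, ∀ x, ‖φ₁ x‖ ≤ C₁) → (∃ C₂, ∀ x, ‖φ₂ x‖ ≤ C₂) →
      (∃ C₃, ∀ x, ‖ψ₁ x‖ ≤ C₃) → (∃ C₄, ∀ x, ‖ψ₂ x‖ ≤ C₄) →
      (∀ x, ψ₁ (T x) - T (ψ₁ x) = β (x + φ₁ x)) →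
      (∀ x, ψ₂ (T x) - T (ψ₂ x) = β (x + φ₂ x)) →
      (∀ x, ‖φ₁ x - φ₂ x‖ ≤ C) →
      ∀ x, ‖ψ₁ x - ψ₂ x‖ ≤ c * d * (1 + t) * ε / (1 - t) * C) ∧
    -- hence there is a unique fixed point h in U_b(X;Y), and ‖h‖_∞ ≤ γ
    (∃ h : X → X,
      (UniformContinuous h ∧ (∃ C, ∀ x, ‖h x‖ ≤ C) ∧ (∀ x, h x ∈ Y) ∧
        ∀ x, h (T x) - T (h x) = β (x + h x)) ∧
      (∀ x, ‖h x‖ ≤ γ) ∧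
      ∀ h' : X → X,
        (UniformContinuous h' ∧ (∃ C, ∀ x, ‖h' x‖ ≤ C) ∧ (∀ x, h' x ∈ Y) ∧
          ∀ x, h' (T x) - T (h' x) = β (x + h' x)) → h' = h) := by
  classical
  have ht1' : (0:ℝ) < 1 - t := by linarith
  have hc0 : (0:ℝ) < c := by linarith
  have hd0 : 0 ≤ d := le_trans (norm_nonneg PM) (hd ▸ le_max_left _ _)
  have hε0 : 0 ≤ ε := by
    rw [hε]; exact div_nonneg (mul_nonneg hγ0.le ht1'.le) (by positivity)
  set D : ℝ := c * d * (1 + t) / (1 - t) with hD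
  have hD0 : 0 ≤ D := div_nonneg (by positivity) ht1'.le
  have hDε : D * ε ≤ γ := by
    rcases eq_or_lt_of_le hd0 with hdz | hdz
    · rw [hε, ← hdz]
      simp [hD, ← hdz]
      linarith
    · have h1 : c * d * (1 + t) ≠ 0 := by positivity
      have h2 : (1:ℝ) - t ≠ 0 := ne_of_gt ht1'
      have : D * ε = γ := by rw [hD, hε]; field_simp
      exact this.le
  -- projection norms
  have hPMle : ∀ v : X, ‖PM v‖ ≤ d * ‖v‖ := fun v =>
    le_trans (PM.le_opNorm v) (mul_le_mul_of_nonneg_right (hd ▸ le_max_left _ _) (norm_nonneg v))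
  have hPNle : ∀ v : X, ‖PN v‖ ≤ d * ‖v‖ := fun v =>
    le_trans (PN.le_opNorm v) (mul_le_mul_of_nonneg_right (hd ▸ le_max_right _ _) (norm_nonneg v))
  -- projection identities
  have hprojM : ∀ v ∈ M, PM v = v ∧ PN v = 0 := by
    intro v hv
    have h2 : PN v = v - PM v := eq_sub_of_add_eq' (hP v)
    have h1 : PN v ∈ M := by rw [h2]; exact Submodule.sub_mem M hv (hPM v)
    have h0 : PN v = 0 := Submodule.disjoint_def.mp hcompl.disjoint _ h1 (hPN v)
    refine ⟨?_, h0⟩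
    have := hP v; rw [h0, add_zero] at this; exact this
  have hprojN : ∀ v ∈ N, PM v = 0 ∧ PN v = v := by
    intro v hv
    have h2 : PM v = v - PN v := eq_sub_of_add_eq (hP v)
    have h1 : PM v ∈ N := by rw [h2]; exact Submodule.sub_mem N hv (hPN v)
    have h0 : PM v = 0 := Submodule.disjoint_def.mp hcompl.disjoint _ (hPM v) h1
    refine ⟨h0, ?_⟩
    have := hP v; rw [h0, zero_add] at this; exact this
  -- power identities
  have hone : ∀ x : X, (1 : X ≃L[ℝ] X) x = x := fun _ => rfl
  have hTS : ∀ x : X, T (T.symm x) = x := fun x => T.apply_symm_apply x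
  have hST : ∀ x : X, T.symm (T x) = x := fun x => T.symm_apply_apply x
  have hpowT : ∀ (k : ℕ) (x : X), (T ^ (k+1)) x = T ((T ^ k) x) := by
    intro k x; rw [pow_succ']; rfl
  have hpowT' : ∀ (k : ℕ) (x : X), (T ^ (k+1)) x = (T ^ k) (T x) := by
    intro k x; rw [pow_succ]; rfl
  have hpowS : ∀ (k : ℕ) (x : X), (T.symm ^ (k+1)) x = T.symm ((T.symm ^ k) x) := by
    intro k x; rw [pow_succ']; rfl
  have hpowS' : ∀ (k : ℕ) (x : X), (T.symm ^ (k+1)) x = (T.symm ^ k) (T.symm x) := by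
    intro k x; rw [pow_succ]; rfl
  have hS1T : ∀ (k : ℕ) (x : X), (T.symm ^ (k+1)) (T x) = (T.symm ^ k) x := by
    intro k x; rw [hpowS', hST]
  have hTS1 : ∀ (k : ℕ) (x : X), T ((T.symm ^ (k+1)) x) = (T.symm ^ k) x := by
    intro k x; rw [hpowS, hTS]
  have hTpow : ∀ (k : ℕ) (y : X), y ∈ M → (T ^ k) y ∈ M := by
    intro k
    induction k with
    | zero => intro y hy; simpa [hone] using hy
    | succ n ih => intro y hy; rw [hpowT]; exact hTM _ (ih y hy)
  have hSpow : ∀ (k : ℕ) (z : X), z ∈ N → (T.symm ^ k) z ∈ N := by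
    intro k
    induction k with
    | zero => intro z hz; simpa [hone] using hz
    | succ n ih => intro z hz; rw [hpowS]; exact hTN _ (ih z hz)
  -- geometric sum bound
  have hgeoms : Summable (fun k : ℕ => t ^ k) := summable_geometric_of_lt_one ht0.le ht1
  have hgeom : ∀ (A : ℝ), 0 ≤ A → ∀ n : ℕ, ∑ k ∈ Finset.range n, A * t ^ k ≤ A * (1-t)⁻¹ := by
    intro A hA n
    rw [← Finset.mul_sum]
    refine mul_le_mul_of_nonneg_left ?_ hA
    calc ∑ k ∈ Finset.range n, t ^ k
        ≤ ∑' k : ℕ, t ^ k := Summable.sum_le_tsum _ (fun i _ => by positivity) hgeoms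
      _ = (1 - t)⁻¹ := tsum_geometric_of_lt_one ht0.le ht1
  -- THE KEY ESTIMATE (Lemma A)
  have keyEst : ∀ (ψ α : X → X) (B K : ℝ), (∀ x, ‖ψ x‖ ≤ B) → (∀ x, ψ x ∈ Y) →
      (∀ x, ψ (T x) - T (ψ x) = α x) → (∀ x, ‖α x‖ ≤ K) → ∀ x, ‖ψ x‖ ≤ D * K := by
    intro ψ α B K hB hYψ heq hK x
    have hK0 : 0 ≤ K := le_trans (norm_nonneg _) (hK 0)
    have hB0 : 0 ≤ B := le_trans (norm_nonneg _) (hB 0)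
    have hTNψ : ∀ z, T (PN (ψ z)) ∈ N := by
      intro z
      have hz := hYψ z
      rw [hY, Submodule.mem_sup] at hz
      obtain ⟨m, hm, w, hw, hmw⟩ := hz
      have hTw : T w ∈ N := by simpa [Submodule.mem_comap] using hw
      have hwN : w ∈ N := by have := hTN (T w) hTw; rwa [hST] at this
      have hPNw : PN (ψ z) = w := by
        rw [← hmw, map_add, (hprojM m hm).2, (hprojN w hwN).2, zero_add]
      rw [hPNw]; exact hTw
    have hfrec : ∀ z, PM (ψ (T z)) = T (PM (ψ z)) + PM (α z) := by
      intro z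
      have h1 : ψ (T z) = α z + T (ψ z) := sub_eq_iff_eq_add.mp (heq z)
      have h2 : T (ψ z) = T (PM (ψ z)) + T (PN (ψ z)) := by rw [← map_add, hP]
      rw [h1, map_add, h2, map_add, (hprojM _ (hTM _ (hPM _))).1, (hprojN _ (hTNψ z)).1]
      abel
    have hgrec : ∀ z, PN (ψ z) = T.symm (PN (ψ (T z))) - T.symm (PN (α z)) := by
      intro z
      have h1 : PN (ψ (T z)) = T (PN (ψ z)) + PN (α z) := by
        have h1' : ψ (T z) = α z + T (ψ z) := sub_eq_iff_eq_add.mp (heq z)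
        have h2 : T (ψ z) = T (PM (ψ z)) + T (PN (ψ z)) := by rw [← map_add, hP]
        rw [h1', map_add, h2, map_add, (hprojM _ (hTM _ (hPM _))).2, (hprojN _ (hTNψ z)).2]
        abel
      rw [h1, map_add, hST]
      abel
    have hiterF : ∀ (n : ℕ) (z : X), PM (ψ z) =
        (T ^ n) (PM (ψ ((T.symm ^ n) z))) +
          ∑ k ∈ Finset.range n, (T ^ k) (PM (α ((T.symm ^ (k+1)) z))) := by
      intro n
      induction n with
      | zero => intro z; simp [hone]
      | succ n ih =>
        intro z
        have h3 := hfrec ((T.symm ^ (n+1)) z)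
        rw [hTS1 n z] at h3
        calc PM (ψ z)
            = (T ^ n) (PM (ψ ((T.symm ^ n) z))) +
              ∑ k ∈ Finset.range n, (T ^ k) (PM (α ((T.symm ^ (k+1)) z))) := ih z
          _ = (T ^ n) (T (PM (ψ ((T.symm ^ (n+1)) z))) + PM (α ((T.symm ^ (n+1)) z))) +
              ∑ k ∈ Finset.range n, (T ^ k) (PM (α ((T.symm ^ (k+1)) z))) := by rw [← h3]
          _ = (T ^ (n+1)) (PM (ψ ((T.symm ^ (n+1)) z))) +
              ∑ k ∈ Finset.range (n+1), (T ^ k) (PM (α ((T.symm ^ (k+1)) z))) := by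
              rw [map_add, ← hpowT' n, Finset.sum_range_succ]; abel
    have hiterG : ∀ (n : ℕ) (z : X), PN (ψ z) =
        (T.symm ^ n) (PN (ψ ((T ^ n) z))) -
          ∑ k ∈ Finset.range n, (T.symm ^ (k+1)) (PN (α ((T ^ k) z))) := by
      intro n
      induction n with
      | zero => intro z; simp [hone]
      | succ n ih =>
        intro z
        have h3 := hgrec ((T ^ n) z)
        rw [← hpowT n z] at h3
        calc PN (ψ z)
            = (T.symm ^ n) (PN (ψ ((T ^ n) z))) -
              ∑ k ∈ Finset.range n, (T.symm ^ (k+1)) (PN (α ((T ^ k) z))) := ih z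
          _ = (T.symm ^ n) (T.symm (PN (ψ ((T ^ (n+1)) z))) - T.symm (PN (α ((T ^ n) z)))) -
              ∑ k ∈ Finset.range n, (T.symm ^ (k+1)) (PN (α ((T ^ k) z))) := by rw [← h3]
          _ = (T.symm ^ (n+1)) (PN (ψ ((T ^ (n+1)) z))) -
              ∑ k ∈ Finset.range (n+1), (T.symm ^ (k+1)) (PN (α ((T ^ k) z))) := by
              rw [map_sub, ← hpowS' n, ← hpowS' n, Finset.sum_range_succ]; abel
    have hfb : ‖PM (ψ x)‖ ≤ c * d * K * (1 - t)⁻¹ := by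
      have hseq : ∀ n : ℕ, ‖PM (ψ x)‖ ≤ c * t ^ n * (d * B) + c * d * K * (1-t)⁻¹ := by
        intro n
        rw [hiterF n x]
        refine le_trans (norm_add_le _ _) (add_le_add ?_ ?_)
        · calc ‖(T ^ n) (PM (ψ ((T.symm ^ n) x)))‖
              ≤ c * t ^ n * ‖PM (ψ ((T.symm ^ n) x))‖ := hM n _ (hPM _)
            _ ≤ c * t ^ n * (d * B) := by
                refine mul_le_mul_of_nonneg_left ?_ (by positivity)
                exact le_trans (hPMle _) (mul_le_mul_of_nonneg_left (hB _) hd0)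
        · calc ‖∑ k ∈ Finset.range n, (T ^ k) (PM (α ((T.symm ^ (k+1)) x)))‖
              ≤ ∑ k ∈ Finset.range n, ‖(T ^ k) (PM (α ((T.symm ^ (k+1)) x)))‖ :=
                norm_sum_le _ _
            _ ≤ ∑ k ∈ Finset.range n, (c * d * K) * t ^ k := by
                refine Finset.sum_le_sum (fun k _ => ?_)
                calc ‖(T ^ k) (PM (α ((T.symm ^ (k+1)) x)))‖
                    ≤ c * t ^ k * ‖PM (α ((T.symm ^ (k+1)) x))‖ := hM k _ (hPM _)
                  _ ≤ c * t ^ k * (d * K) := by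
                      refine mul_le_mul_of_nonneg_left ?_ (by positivity)
                      exact le_trans (hPMle _) (mul_le_mul_of_nonneg_left (hK _) hd0)
                  _ = (c * d * K) * t ^ k := by ring
            _ ≤ (c * d * K) * (1-t)⁻¹ := hgeom _ (by positivity) n
      have hlim : Tendsto (fun n : ℕ => c * t ^ n * (d * B) + c * d * K * (1-t)⁻¹) atTop
          (𝓝 (c * 0 * (d*B) + c * d * K * (1-t)⁻¹)) :=
        Tendsto.add
          (((tendsto_pow_atTop_nhds_zero_of_lt_one ht0.le ht1).const_mul c).mul_const (d*B))
          tendsto_const_nhds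
      have := le_of_tendsto_of_tendsto' tendsto_const_nhds hlim hseq
      simpa using this
    have hgb : ‖PN (ψ x)‖ ≤ c * d * K * t * (1 - t)⁻¹ := by
      have hseq : ∀ n : ℕ, ‖PN (ψ x)‖ ≤ c * t ^ n * (d * B) + c * d * K * t * (1-t)⁻¹ := by
        intro n
        rw [hiterG n x]
        refine le_trans (norm_sub_le _ _) (add_le_add ?_ ?_)
        · calc ‖(T.symm ^ n) (PN (ψ ((T ^ n) x)))‖
              ≤ c * t ^ n * ‖PN (ψ ((T ^ n) x))‖ := hN n _ (hPN _)
            _ ≤ c * t ^ n * (d * B) := by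
                refine mul_le_mul_of_nonneg_left ?_ (by positivity)
                exact le_trans (hPNle _) (mul_le_mul_of_nonneg_left (hB _) hd0)
        · calc ‖∑ k ∈ Finset.range n, (T.symm ^ (k+1)) (PN (α ((T ^ k) x)))‖
              ≤ ∑ k ∈ Finset.range n, ‖(T.symm ^ (k+1)) (PN (α ((T ^ k) x)))‖ :=
                norm_sum_le _ _
            _ ≤ ∑ k ∈ Finset.range n, (c * d * K * t) * t ^ k := by
                refine Finset.sum_le_sum (fun k _ => ?_)
                calc ‖(T.symm ^ (k+1)) (PN (α ((T ^ k) x)))‖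
                    ≤ c * t ^ (k+1) * ‖PN (α ((T ^ k) x))‖ := hN (k+1) _ (hPN _)
                  _ ≤ c * t ^ (k+1) * (d * K) := by
                      refine mul_le_mul_of_nonneg_left ?_ (by positivity)
                      exact le_trans (hPNle _) (mul_le_mul_of_nonneg_left (hK _) hd0)
                  _ = (c * d * K * t) * t ^ k := by ring
            _ ≤ (c * d * K * t) * (1-t)⁻¹ := hgeom _ (by positivity) n
      have hlim : Tendsto (fun n : ℕ => c * t ^ n * (d * B) + c * d * K * t * (1-t)⁻¹) atTop
          (𝓝 (c * 0 * (d*B) + c * d * K * t * (1-t)⁻¹)) :=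
        Tendsto.add
          (((tendsto_pow_atTop_nhds_zero_of_lt_one ht0.le ht1).const_mul c).mul_const (d*B))
          tendsto_const_nhds
      have := le_of_tendsto_of_tendsto' tendsto_const_nhds hlim hseq
      simpa using this
    calc ‖ψ x‖ = ‖PM (ψ x) + PN (ψ x)‖ := by rw [hP]
      _ ≤ ‖PM (ψ x)‖ + ‖PN (ψ x)‖ := norm_add_le _ _
      _ ≤ c * d * K * (1-t)⁻¹ + c * d * K * t * (1-t)⁻¹ := add_le_add hfb hgb
      _ = D * K := by rw [hD]; field_simp
  -- EXISTENCE OF SOLUTIONS (Lemma B)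
  have solveEq : ∀ (α : X → X) (K : ℝ), 0 ≤ K → UniformContinuous α → (∀ x, ‖α x‖ ≤ K) →
      ∃ ψ : X → X, UniformContinuous ψ ∧ (∀ x, ‖ψ x‖ ≤ D * K) ∧ (∀ x, ψ x ∈ Y) ∧
        (∀ x, ψ (T x) - T (ψ x) = α x) := by
    intro α K hK0 hαuc hαK
    set a : X → ℕ → X := fun x k => (T ^ k) (PM (α ((T.symm ^ (k+1)) x))) with ha
    set b : X → ℕ → X := fun x k => (T.symm ^ (k+1)) (PN (α ((T ^ k) x))) with hb
    have ha_bd : ∀ x k, ‖a x k‖ ≤ (c*d*K) * t ^ k := by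
      intro x k
      calc ‖a x k‖ ≤ c * t ^ k * ‖PM (α ((T.symm ^ (k+1)) x))‖ := hM k _ (hPM _)
        _ ≤ c * t ^ k * (d * K) := by
            refine mul_le_mul_of_nonneg_left ?_ (by positivity)
            exact le_trans (hPMle _) (mul_le_mul_of_nonneg_left (hαK _) hd0)
        _ = (c*d*K) * t ^ k := by ring
    have hb_bd : ∀ x k, ‖b x k‖ ≤ (c*d*K*t) * t ^ k := by
      intro x k
      calc ‖b x k‖ ≤ c * t ^ (k+1) * ‖PN (α ((T ^ k) x))‖ := hN (k+1) _ (hPN _)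
        _ ≤ c * t ^ (k+1) * (d * K) := by
            refine mul_le_mul_of_nonneg_left ?_ (by positivity)
            exact le_trans (hPNle _) (mul_le_mul_of_nonneg_left (hαK _) hd0)
        _ = (c*d*K*t) * t ^ k := by ring
    have hsa : ∀ x, Summable (a x) := fun x =>
      Summable.of_norm_bounded (hgeoms.mul_left (c*d*K)) (ha_bd x)
    have hsb : ∀ x, Summable (b x) := fun x =>
      Summable.of_norm_bounded (hgeoms.mul_left (c*d*K*t)) (hb_bd x)
    have hsan : ∀ x, Summable (fun k => ‖a x k‖) := fun x =>
      Summable.of_nonneg_of_le (fun k => norm_nonneg _) (ha_bd x) (hgeoms.mul_left (c*d*K))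
    have hsbn : ∀ x, Summable (fun k => ‖b x k‖) := fun x =>
      Summable.of_nonneg_of_le (fun k => norm_nonneg _) (hb_bd x) (hgeoms.mul_left (c*d*K*t))
    set ψ : X → X := fun x => (∑' k, a x k) - ∑' k, b x k with hψ
    -- map under T of the tsums
    have hTa : ∀ x, T (∑' k, a x k) = ∑' k, T (a x k) := by
      intro x
      have := ((hsa x).hasSum.mapL (T : X →L[ℝ] X)).tsum_eq
      simpa using this.symm
    have hTb : ∀ x, T (∑' k, b x k) = ∑' k, T (b x k) := by
      intro x
      have := ((hsb x).hasSum.mapL (T : X →L[ℝ] X)).tsum_eq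
      simpa using this.symm
    have hsTb : ∀ x, Summable (fun k => T (b x k)) := by
      intro x
      have := ((hsb x).hasSum.mapL (T : X →L[ℝ] X)).summable
      simpa using this
    -- the norm bound
    have hψbd : ∀ x, ‖ψ x‖ ≤ D * K := by
      intro x
      have h1 : ‖∑' k, a x k‖ ≤ (c*d*K) * (1-t)⁻¹ := by
        calc ‖∑' k, a x k‖ ≤ ∑' k, ‖a x k‖ := norm_tsum_le_tsum_norm (hsan x)
          _ ≤ ∑' k : ℕ, (c*d*K) * t ^ k :=
              Summable.tsum_le_tsum (ha_bd x) (hsan x) (hgeoms.mul_left (c*d*K))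
          _ = (c*d*K) * (1-t)⁻¹ := by
              rw [tsum_mul_left, tsum_geometric_of_lt_one ht0.le ht1]
      have h2 : ‖∑' k, b x k‖ ≤ (c*d*K*t) * (1-t)⁻¹ := by
        calc ‖∑' k, b x k‖ ≤ ∑' k, ‖b x k‖ := norm_tsum_le_tsum_norm (hsbn x)
          _ ≤ ∑' k : ℕ, (c*d*K*t) * t ^ k :=
              Summable.tsum_le_tsum (hb_bd x) (hsbn x) (hgeoms.mul_left (c*d*K*t))
          _ = (c*d*K*t) * (1-t)⁻¹ := by
              rw [tsum_mul_left, tsum_geometric_of_lt_one ht0.le ht1]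
      calc ‖ψ x‖ ≤ ‖∑' k, a x k‖ + ‖∑' k, b x k‖ := norm_sub_le _ _
        _ ≤ (c*d*K) * (1-t)⁻¹ + (c*d*K*t) * (1-t)⁻¹ := add_le_add h1 h2
        _ = D * K := by rw [hD]; field_simp
    -- membership in Y
    have htsuma : ∀ x, (∑' k, a x k) ∈ M := by
      intro x
      refine hMclosed.mem_of_tendsto (hsa x).hasSum.tendsto_sum_nat
        (Filter.Eventually.of_forall fun n => ?_)
      exact Submodule.sum_mem M (fun k _ => hTpow k _ (hPM _))
    have htsumb : ∀ x, (∑' k, b x k) ∈ N := by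
      intro x
      refine hNclosed.mem_of_tendsto (hsb x).hasSum.tendsto_sum_nat
        (Filter.Eventually.of_forall fun n => ?_)
      exact Submodule.sum_mem N (fun k _ => hSpow (k+1) _ (hPN _))
    have hTbmem : ∀ x k, T (b x k) ∈ N := by
      intro x k
      have : T (b x k) = (T.symm ^ k) (PN (α ((T ^ k) x))) := hTS1 k _
      rw [this]; exact hSpow k _ (hPN _)
    have hTtsumb : ∀ x, T (∑' k, b x k) ∈ N := by
      intro x
      rw [hTb x]
      refine hNclosed.mem_of_tendsto (hsTb x).hasSum.tendsto_sum_nat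
        (Filter.Eventually.of_forall fun n => ?_)
      exact Submodule.sum_mem N (fun k _ => hTbmem x k)
    have hψmem : ∀ x, ψ x ∈ Y := by
      intro x
      rw [hY]
      refine Submodule.sub_mem _ (Submodule.mem_sup_left (htsuma x))
        (Submodule.mem_sup_right ?_)
      simpa [Submodule.mem_comap] using hTtsumb x
    -- the equation
    have hψeq : ∀ x, ψ (T x) - T (ψ x) = α x := by
      intro x
      have haTx0 : a (T x) 0 = PM (α x) := by
        simp only [ha]
        rw [hS1T 0 x]
        simp [hone]
      have haTx : ∀ k, a (T x) (k+1) = T (a x k) := by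
        intro k
        simp only [ha]
        rw [hS1T (k+1) x, hpowT]
      have h_a : ∑' k, a (T x) k = PM (α x) + T (∑' k, a x k) := by
        rw [Summable.tsum_eq_zero_add (hsa (T x)), haTx0, hTa x]
        congr 1
        exact tsum_congr haTx
      have hTbk : ∀ k, T (b x k) = (T.symm ^ k) (PN (α ((T ^ k) x))) := fun k => hTS1 k _
      have hbTx : ∀ k, b (T x) k = T (b x (k+1)) := by
        intro k
        rw [hTbk (k+1)]
        simp only [hb]
        rw [← hpowT' k x]
      have h_b : ∑' k, b (T x) k = T (∑' k, b x k) - PN (α x) := by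
        rw [hTb x, Summable.tsum_eq_zero_add (hsTb x), hTbk 0]
        rw [tsum_congr hbTx]
        simp only [pow_zero, hone]
        abel
      show ((∑' k, a (T x) k) - ∑' k, b (T x) k) - T ((∑' k, a x k) - ∑' k, b x k) = α x
      rw [map_sub, h_a, h_b]
      conv_rhs => rw [← hP (α x)]
      abel
    -- uniform continuity
    have hψuc : UniformContinuous ψ := by
      apply uc_of_uniform_approx
      intro η hη
      obtain ⟨n, hn⟩ : ∃ n : ℕ, (c*d*K*(1+t)*(1-t)⁻¹) * t ^ n < η := by
        have htend : Tendsto (fun n : ℕ => (c*d*K*(1+t)*(1-t)⁻¹) * t ^ n) atTop (𝓝 0) := by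
          simpa using (tendsto_pow_atTop_nhds_zero_of_lt_one ht0.le ht1).const_mul
            (c*d*K*(1+t)*(1-t)⁻¹)
        exact (htend.eventually (gt_mem_nhds hη)).exists
      refine ⟨fun x => (∑ k ∈ Finset.range n, a x k) - ∑ k ∈ Finset.range n, b x k, ?_, ?_⟩
      · have hsum_uc : ∀ (f : X → ℕ → X), (∀ k, UniformContinuous fun x => f x k) →
            ∀ m : ℕ, UniformContinuous (fun x => ∑ k ∈ Finset.range m, f x k) := by
          intro f hf m
          induction m with
          | zero => simpa using uniformContinuous_const
          | succ m ih =>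
            simp only [Finset.sum_range_succ]
            exact ih.add (hf m)
        have hterm_a : ∀ k, UniformContinuous fun x => a x k := by
          intro k
          exact ((T^k : X ≃L[ℝ] X) : X →L[ℝ] X).uniformContinuous.comp
            (PM.uniformContinuous.comp (hαuc.comp
              ((T.symm^(k+1) : X ≃L[ℝ] X) : X →L[ℝ] X).uniformContinuous))
        have hterm_b : ∀ k, UniformContinuous fun x => b x k := by
          intro k
          exact ((T.symm^(k+1) : X ≃L[ℝ] X) : X →L[ℝ] X).uniformContinuous.comp
            (PN.uniformContinuous.comp (hαuc.comp
              ((T^k : X ≃L[ℝ] X) : X →L[ℝ] X).uniformContinuous))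
        exact (hsum_uc a hterm_a n).sub (hsum_uc b hterm_b n)
      · intro x
        have hta : (∑' k, a x k) - ∑ k ∈ Finset.range n, a x k = ∑' k, a x (k+n) := by
          have h6 := Summable.sum_add_tsum_nat_add n (hsa x)
          rw [← h6]; abel
        have htb : (∑' k, b x k) - ∑ k ∈ Finset.range n, b x k = ∑' k, b x (k+n) := by
          have h6 := Summable.sum_add_tsum_nat_add n (hsb x)
          rw [← h6]; abel
        have hkey : ((∑ k ∈ Finset.range n, a x k) - ∑ k ∈ Finset.range n, b x k) - ψ x
            = (∑' k, b x (k+n)) - (∑' k, a x (k+n)) := by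
          show ((∑ k ∈ Finset.range n, a x k) - ∑ k ∈ Finset.range n, b x k)
              - ((∑' k, a x k) - ∑' k, b x k) = (∑' k, b x (k+n)) - (∑' k, a x (k+n))
          rw [← hta, ← htb]; abel
        rw [dist_eq_norm, hkey]
        have hta_tail : ‖∑' k, a x (k+n)‖ ≤ ((c*d*K) * t ^ n) * (1-t)⁻¹ := by
          have hbd : ∀ k : ℕ, ‖a x (k+n)‖ ≤ ((c*d*K) * t ^ n) * t ^ k := by
            intro k
            calc ‖a x (k+n)‖ ≤ (c*d*K) * t ^ (k+n) := ha_bd x (k+n)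
              _ = ((c*d*K) * t ^ n) * t ^ k := by rw [pow_add]; ring
          calc ‖∑' k, a x (k+n)‖ ≤ ∑' k, ‖a x (k+n)‖ :=
              norm_tsum_le_tsum_norm (Summable.of_nonneg_of_le (fun k => norm_nonneg _) hbd
                (hgeoms.mul_left _))
            _ ≤ ∑' k : ℕ, ((c*d*K) * t ^ n) * t ^ k :=
              Summable.tsum_le_tsum hbd (Summable.of_nonneg_of_le (fun k => norm_nonneg _) hbd
                (hgeoms.mul_left _)) (hgeoms.mul_left _)
            _ = ((c*d*K) * t ^ n) * (1-t)⁻¹ := by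
              rw [tsum_mul_left, tsum_geometric_of_lt_one ht0.le ht1]
        have htb_tail : ‖∑' k, b x (k+n)‖ ≤ ((c*d*K*t) * t ^ n) * (1-t)⁻¹ := by
          have hbd : ∀ k : ℕ, ‖b x (k+n)‖ ≤ ((c*d*K*t) * t ^ n) * t ^ k := by
            intro k
            calc ‖b x (k+n)‖ ≤ (c*d*K*t) * t ^ (k+n) := hb_bd x (k+n)
              _ = ((c*d*K*t) * t ^ n) * t ^ k := by rw [pow_add]; ring
          calc ‖∑' k, b x (k+n)‖ ≤ ∑' k, ‖b x (k+n)‖ :=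
              norm_tsum_le_tsum_norm (Summable.of_nonneg_of_le (fun k => norm_nonneg _) hbd
                (hgeoms.mul_left _))
            _ ≤ ∑' k : ℕ, ((c*d*K*t) * t ^ n) * t ^ k :=
              Summable.tsum_le_tsum hbd (Summable.of_nonneg_of_le (fun k => norm_nonneg _) hbd
                (hgeoms.mul_left _)) (hgeoms.mul_left _)
            _ = ((c*d*K*t) * t ^ n) * (1-t)⁻¹ := by
              rw [tsum_mul_left, tsum_geometric_of_lt_one ht0.le ht1]
        calc ‖(∑' k, b x (k+n)) - ∑' k, a x (k+n)‖
            ≤ ‖∑' k, b x (k+n)‖ + ‖∑' k, a x (k+n)‖ := norm_sub_le _ _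
          _ ≤ ((c*d*K*t) * t ^ n) * (1-t)⁻¹ + ((c*d*K) * t ^ n) * (1-t)⁻¹ :=
              add_le_add htb_tail hta_tail
          _ = (c*d*K*(1+t)*(1-t)⁻¹) * t ^ n := by ring
          _ ≤ η := hn.le
    exact ⟨ψ, hψuc, hψbd, hψmem, hψeq⟩
  -- MAIN RESULT
  refine ⟨?_, ?_, ?_⟩
  · -- contraction constant < 1
    have hcoef : c * d * (1 + t) * ε / (1 - t) = D * ε := by rw [hD]; ring
    rw [hcoef]
    exact lt_of_le_of_lt hDε hγ1
  · -- the Lipschitz estimate for Φ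
    rintro φ₁ φ₂ ψ₁ ψ₂ C _ _ hY1 hY2 _ _ _ _ _ _ ⟨C₃, hC₃⟩ ⟨C₄, hC₄⟩ he1 he2 hC x
    have happ := keyEst (fun z => ψ₁ z - ψ₂ z) (fun z => β (z + φ₁ z) - β (z + φ₂ z))
      (C₃ + C₄) (ε * C)
      (fun z => le_trans (norm_sub_le _ _) (add_le_add (hC₃ z) (hC₄ z)))
      (fun z => Submodule.sub_mem Y (hY1 z) (hY2 z))
      (fun z => by beta_reduce; rw [map_sub, ← he1 z, ← he2 z]; abel)
      (fun z => by
        refine le_trans (hβlip _ _) ?_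
        have h6 : (z + φ₁ z) - (z + φ₂ z) = φ₁ z - φ₂ z := by abel
        rw [h6]
        exact mul_le_mul_of_nonneg_left (hC z) hε0)
    calc ‖ψ₁ x - ψ₂ x‖ ≤ D * (ε * C) := happ x
      _ = c * d * (1 + t) * ε / (1 - t) * C := by rw [hD]; ring
  · -- existence and uniqueness of the fixed point
    have hβcomp : ∀ (φ : X → X), UniformContinuous φ →
        UniformContinuous (fun x => β (x + φ x)) :=
      fun φ hφ => hβuc.comp (uniformContinuous_id.add hφ)
    have step : ∀ φ : X → X, ∃ ψ : X → X, UniformContinuous φ →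
        ((UniformContinuous ψ ∧ (∀ x, ‖ψ x‖ ≤ γ) ∧ (∀ x, ψ x ∈ Y)) ∧
          ∀ x, ψ (T x) - T (ψ x) = β (x + φ x)) := by
      intro φ
      by_cases hφ : UniformContinuous φ
      · obtain ⟨ψ, h1, h2, h3, h4⟩ :=
          solveEq (fun x => β (x + φ x)) ε hε0 (hβcomp φ hφ) (fun x => hβbd _)
        exact ⟨ψ, fun _ => ⟨⟨h1, fun x => le_trans (h2 x) hDε, h3⟩, h4⟩⟩
      · exact ⟨fun _ => 0, fun h => absurd h hφ⟩
    choose F hF using step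
    set u : ℕ → X → X := fun n => F^[n] (fun _ => 0) with hu
    have husucc : ∀ n, u (n+1) = F (u n) := fun n => Function.iterate_succ_apply' F n _
    have hugood : ∀ n, UniformContinuous (u n) ∧ (∀ x, ‖u n x‖ ≤ γ) ∧ (∀ x, u n x ∈ Y) := by
      intro n
      induction n with
      | zero =>
        refine ⟨uniformContinuous_const, fun x => ?_, fun x => ?_⟩
        · show ‖(0:X)‖ ≤ γ
          simpa using hγ0.le
        · show (0:X) ∈ Y
          exact Y.zero_mem
      | succ n ih =>
        rw [husucc n]
        exact ⟨(hF (u n) ih.1).1.1, (hF (u n) ih.1).1.2.1, (hF (u n) ih.1).1.2.2⟩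
    have hueq : ∀ n x, u (n+1) (T x) - T (u (n+1) x) = β (x + u n x) := by
      intro n x
      rw [husucc n]
      exact (hF (u n) (hugood n).1).2 x
    set q : ℝ := D * ε with hq
    have hq0 : 0 ≤ q := mul_nonneg hD0 hε0
    have hq1 : q < 1 := lt_of_le_of_lt hDε hγ1
    have hdiff : ∀ n x, ‖u (n+1) x - u n x‖ ≤ (2*γ) * q ^ n := by
      intro n
      induction n with
      | zero =>
        intro x
        have h0 : u 0 x = 0 := rfl
        rw [h0, sub_zero, pow_zero, mul_one]
        have := (hugood 1).2.1 x
        linarith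
      | succ n ih =>
        intro x
        have happ := keyEst (fun z => u (n+2) z - u (n+1) z)
          (fun z => β (z + u (n+1) z) - β (z + u n z)) (2*γ) (ε * ((2*γ) * q ^ n))
          (fun z => le_trans (norm_sub_le _ _)
            (by have := (hugood (n+2)).2.1 z; have := (hugood (n+1)).2.1 z; linarith))
          (fun z => Submodule.sub_mem Y ((hugood (n+2)).2.2 z) ((hugood (n+1)).2.2 z))
          (fun z => by beta_reduce; rw [map_sub, ← hueq (n+1) z, ← hueq n z]; abel)
          (fun z => by
            refine le_trans (hβlip _ _) ?_
            have h6 : (z + u (n+1) z) - (z + u n z) = u (n+1) z - u n z := by abel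
            rw [h6]
            exact mul_le_mul_of_nonneg_left (ih z) hε0)
        calc ‖u (n+2) x - u (n+1) x‖ ≤ D * (ε * ((2*γ) * q ^ n)) := happ x
          _ = (2*γ) * q ^ (n+1) := by rw [hq]; ring
    have hcauchy : ∀ x, CauchySeq (fun n => u n x) := by
      intro x
      apply cauchySeq_of_le_geometric q (2*γ) hq1
      intro n
      rw [dist_eq_norm, norm_sub_rev]
      exact hdiff n x
    have hglim : ∀ x : X, ∃ l : X, Tendsto (fun n => u n x) atTop (𝓝 l) :=
      fun x => cauchySeq_tendsto_of_complete (hcauchy x)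
    choose g hg using hglim
    have hgdist : ∀ (n : ℕ) (x : X), ‖u n x - g x‖ ≤ (2*γ) * q ^ n / (1 - q) := by
      intro n x
      have := dist_le_of_le_geometric_of_tendsto q (2*γ) hq1
        (fun m => by rw [dist_eq_norm, norm_sub_rev]; exact hdiff m x) (hg x) n
      rwa [dist_eq_norm] at this
    have hgbd : ∀ x, ‖g x‖ ≤ γ :=
      fun x => le_of_tendsto (hg x).norm
        (Filter.Eventually.of_forall fun n => (hugood n).2.1 x)
    have hq1' : (0:ℝ) < 1 - q := by linarith
    have hguc : UniformContinuous g := by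
      apply uc_of_uniform_approx
      intro η hη
      obtain ⟨n, hn⟩ : ∃ n : ℕ, ((2*γ)/(1-q)) * q ^ n < η := by
        have htend : Tendsto (fun n : ℕ => ((2*γ)/(1-q)) * q ^ n) atTop (𝓝 0) := by
          simpa using (tendsto_pow_atTop_nhds_zero_of_lt_one hq0 hq1).const_mul ((2*γ)/(1-q))
        exact (htend.eventually (gt_mem_nhds hη)).exists
      refine ⟨u n, (hugood n).1, fun x => ?_⟩
      rw [dist_eq_norm]
      calc ‖u n x - g x‖ ≤ (2*γ) * q ^ n / (1 - q) := hgdist n x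
        _ = ((2*γ)/(1-q)) * q ^ n := by ring
        _ ≤ η := hn.le
    obtain ⟨h, hhuc, hhbd, hhmem, hheq⟩ :=
      solveEq (fun x => β (x + g x)) ε hε0 (hβcomp g hguc) (fun x => hβbd _)
    have hhbd' : ∀ x, ‖h x‖ ≤ γ := fun x => le_trans (hhbd x) hDε
    have hhg : ∀ x, h x = g x := by
      intro x
      have hest : ∀ (n : ℕ) (x' : X),
          ‖h x' - u (n+1) x'‖ ≤ (D * ε * (2*γ) / (1-q)) * q ^ n := by
        intro n
        intro x'
        have happ := keyEst (fun z => h z - u (n+1) z)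
          (fun z => β (z + g z) - β (z + u n z)) (2*γ) (ε * ((2*γ) * q ^ n / (1-q)))
          (fun z => le_trans (norm_sub_le _ _)
            (by have := hhbd' z; have := (hugood (n+1)).2.1 z; linarith))
          (fun z => Submodule.sub_mem Y (hhmem z) ((hugood (n+1)).2.2 z))
          (fun z => by beta_reduce; rw [map_sub, ← hheq z, ← hueq n z]; abel)
          (fun z => by
            refine le_trans (hβlip _ _) ?_
            have h6 : (z + g z) - (z + u n z) = g z - u n z := by abel
            rw [h6]
            refine mul_le_mul_of_nonneg_left ?_ hε0
            rw [norm_sub_rev]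
            exact hgdist n z)
        calc ‖h x' - u (n+1) x'‖ ≤ D * (ε * ((2*γ) * q ^ n / (1-q))) := happ x'
          _ = (D * ε * (2*γ) / (1-q)) * q ^ n := by ring
      have htendA : Tendsto (fun n : ℕ => (D * ε * (2*γ) / (1-q)) * q ^ n) atTop (𝓝 0) := by
        simpa using (tendsto_pow_atTop_nhds_zero_of_lt_one hq0 hq1).const_mul
          (D * ε * (2*γ) / (1-q))
      have h2 : Tendsto (fun n => u (n+1) x) atTop (𝓝 (h x)) := by
        refine tendsto_iff_dist_tendsto_zero.mpr ?_
        refine squeeze_zero (fun n => dist_nonneg) (fun n => ?_) htendA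
        rw [dist_eq_norm, norm_sub_rev]
        exact hest n x
      have h1 : Tendsto (fun n => u (n+1) x) atTop (𝓝 (g x)) :=
        (hg x).comp (tendsto_add_atTop_nat 1)
      exact tendsto_nhds_unique h2 h1
    have hheq' : ∀ x, h (T x) - T (h x) = β (x + h x) := by
      intro x
      rw [hheq x, hhg x]
    refine ⟨h, ⟨hhuc, ⟨γ, hhbd'⟩, hhmem, hheq'⟩, hhbd', ?_⟩
    rintro h' ⟨h'uc, ⟨C', hC'⟩, h'mem, h'eq⟩
    funext x
    have hbase : ∀ z, ‖h' z - h z‖ ≤ C' + γ :=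
      fun z => le_trans (norm_sub_le _ _) (add_le_add (hC' z) (hhbd' z))
    have hiter : ∀ (n : ℕ) (x' : X), ‖h' x' - h x'‖ ≤ q ^ n * (C' + γ) := by
      intro n
      induction n with
      | zero => intro x'; simpa using hbase x'
      | succ n ih =>
        intro x'
        have happ := keyEst (fun z => h' z - h z)
          (fun z => β (z + h' z) - β (z + h z)) (C' + γ) (ε * (q ^ n * (C' + γ)))
          hbase
          (fun z => Submodule.sub_mem Y (h'mem z) (hhmem z))
          (fun z => by beta_reduce; rw [map_sub, ← h'eq z, ← hheq' z]; abel)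
          (fun z => by
            refine le_trans (hβlip _ _) ?_
            have h6 : (z + h' z) - (z + h z) = h' z - h z := by abel
            rw [h6]
            exact mul_le_mul_of_nonneg_left (ih z) hε0)
        calc ‖h' x' - h x'‖ ≤ D * (ε * (q ^ n * (C' + γ))) := happ x'
          _ = q ^ (n+1) * (C' + γ) := by rw [hq]; ring
    have hzero : ‖h' x - h x‖ ≤ 0 := by
      have htend : Tendsto (fun n : ℕ => q ^ n * (C' + γ)) atTop (𝓝 0) := by
        simpa using (tendsto_pow_atTop_nhds_zero_of_lt_one hq0 hq1).mul_const (C' + γ)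
      exact le_of_tendsto_of_tendsto' tendsto_const_nhds htend (fun n => hiter n x)
    have := norm_le_zero_iff.mp hzero
    exact sub_eq_zero.mp this
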